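/- Let (X,d) be an ultrametric space, let r > 0, and let μ = ∨_i α_i ⊙ δ_{x_i} and ν = ∨_j β_j ⊙ δ_{y_j} be idempotent measures of finite support on X with d̂(μ,ν) < r. Then for every x ∈ X, max{α_i : d(x_i, x) < r} = max{β_j : d(y_j, x) < r}, where the maximum over the empty set is −∞. -/

import Mathlib

open scoped ENNReal

noncomputable section

/-- A metric is an *ultrametric* if the strong triangle inequality holds. -/
def IsUltra (X : Type*) [MetricSpace X] : Prop :=
  ∀ x y z : X, dist x y ≤ max (dist x z) (dist z y)

/-- `mmOf x α` is the max-min functional `∨ᵢ αᵢ ∧ δ_{x i}`,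
`φ ↦ maxᵢ min (α i) (φ (x i))` (computed in the extended reals). -/
def mmOf {A : Type*} {n : ℕ} (x : Fin (n + 1) → A) (α : Fin (n + 1) → EReal) :
    (A → ℝ) → ℝ :=
  fun φ => (⨆ i, min (α i) ((φ (x i) : EReal))).toReal

/-- `μ` is a max-min measure of finite support, with support contained in `S`. -/
def IsMMOn {A : Type*} (S : Set A) (μ : (A → ℝ) → ℝ) : Prop :=
  ∃ (n : ℕ) (x : Fin (n + 1) → A) (α : Fin (n + 1) → EReal),
    (∀ i, x i ∈ S) ∧ (∃ i, α i = ⊤) ∧ μ = mmOf x α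

/-- `μ` is a max-min measure of finite support. -/
def IsMM {A : Type*} (μ : (A → ℝ) → ℝ) : Prop :=
  IsMMOn Set.univ μ

/-- `idemOf x α` is the idempotent measure `∨ᵢ αᵢ ⊙ δ_{x i}`,
`φ ↦ maxᵢ (α i + φ (x i))` (computed in the extended reals). -/
def idemOf {A : Type*} {n : ℕ} (x : Fin (n + 1) → A) (α : Fin (n + 1) → EReal) :
    (A → ℝ) → ℝ :=
  fun φ => (⨆ i, (α i + (φ (x i) : EReal))).toReal

/-- `μ` is an idempotent measure of finite support, with support contained in `S`. -/
def IsIdemOn {A : Type*} (S : Set A) (μ : (A → ℝ) → ℝ) : Prop :=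
  ∃ (n : ℕ) (x : Fin (n + 1) → A) (α : Fin (n + 1) → EReal),
    (∀ i, x i ∈ S) ∧ (∀ i, α i ≤ 0) ∧ (∃ i, α i = 0) ∧ μ = idemOf x α

/-- `μ` is an idempotent measure of finite support. -/
def IsIdem {A : Type*} (μ : (A → ℝ) → ℝ) : Prop :=
  IsIdemOn Set.univ μ

/-- The Dirac measure `δ_a`. -/
def dirac {A : Type*} (a : A) : (A → ℝ) → ℝ := fun φ => φ a

/-- `FrE e r φ`: the function `φ` is constant on every open `r`-ball of the
(extended-valued) distance `e`; this is the family `𝓕_r`. -/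
def FrE {A : Type*} (e : A → A → ℝ≥0∞) (r : ℝ≥0∞) (φ : A → ℝ) : Prop :=
  ∀ x y : A, e x y < r → φ x = φ y

/-- The ultrametric `d̂` on functionals:
`d̂(μ,ν) = inf {r > 0 ∣ μ φ = ν φ for every φ ∈ 𝓕_r}`. -/
def dHatE {A : Type*} (e : A → A → ℝ≥0∞) (μ ν : (A → ℝ) → ℝ) : ℝ≥0∞ :=
  sInf {r : ℝ≥0∞ | 0 < r ∧ ∀ φ : A → ℝ, FrE e r φ → μ φ = ν φ}

/-- The pushforward `J_ω(f)` of functionals along `f`. -/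
def Jmap {A B : Type*} (f : A → B) (μ : (A → ℝ) → ℝ) : (B → ℝ) → ℝ :=
  fun φ => μ (φ ∘ f)

/-- The extended distance of a metric space, as a two-variable function. -/
def eD (X : Type*) [PseudoEMetricSpace X] : X → X → ℝ≥0∞ :=
  fun x y => edist x y

/-- The monad multiplication (`ξ` for max-min measures, `ζ` for idempotent
measures): `mult M φ = M (μ ↦ μ φ)`. -/
def mult {A : Type*} (M : (((A → ℝ) → ℝ) → ℝ) → ℝ) : (A → ℝ) → ℝ :=
  fun φ => M fun μ => μ φ


open Classical in
private lemma supSplit {k : ℕ} (γ : Fin (k + 1) → EReal) (P : Fin (k + 1) → Prop) (c : ℝ) :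
    (⨆ i, (γ i + (((if P i then c else 0 : ℝ) : EReal)))) =
      max ((⨆ i, ⨆ (_ : P i), γ i) + (c : EReal)) (⨆ i, ⨆ (_ : ¬ P i), γ i) := by
  apply le_antisymm
  · refine iSup_le fun i => ?_
    by_cases h : P i
    · rw [if_pos h]
      exact le_max_of_le_left (add_le_add_left (le_iSup₂ (f := fun i (_ : P i) => γ i) i h) _)
    · rw [if_neg h]
      simp only [EReal.coe_zero, add_zero]
      exact le_max_of_le_right (le_iSup₂ (f := fun i (_ : ¬ P i) => γ i) i h)
  · refine max_le ?_ ?_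
    · obtain ⟨i1, hi1⟩ := exists_eq_ciSup_of_finite (f := fun i => ⨆ (_ : P i), γ i)
      rw [← hi1]
      by_cases h : P i1
      · simp only [h, iSup_pos]
        calc γ i1 + (c : EReal) = γ i1 + (((if P i1 then c else 0 : ℝ)) : EReal) := by
              rw [if_pos h]
          _ ≤ _ := le_iSup (fun i => γ i + (((if P i then c else 0 : ℝ)) : EReal)) i1
      · simp [h]
    · obtain ⟨i2, hi2⟩ := exists_eq_ciSup_of_finite (f := fun i => ⨆ (_ : ¬ P i), γ i)
      rw [← hi2]
      by_cases h : P i2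
      · simp [h]
      · simp only [h, iSup_pos, not_false_iff]
        calc γ i2 = γ i2 + (((if P i2 then c else 0 : ℝ)) : EReal) := by
              rw [if_neg h]; simp
          _ ≤ _ := le_iSup (fun i => γ i + (((if P i then c else 0 : ℝ)) : EReal)) i2

private lemma resolveMax {A B : EReal} (hA : A ≤ 0) (hB : B ≤ 0) {c : ℝ}
    (hc : -A.toReal + 1 ≤ c) :
    (max (A + (c : EReal)) B).toReal = if A = ⊥ then B.toReal else A.toReal + c := by
  by_cases h : A = ⊥
  · simp [h]
  · have hAt : A ≠ ⊤ := (hA.trans_lt (by simp)).ne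
    rw [if_neg h]
    have hAc : A + (c : EReal) = ((A.toReal + c : ℝ) : EReal) := by
      nth_rewrite 1 [← EReal.coe_toReal hAt h]
      norm_cast
    have hpos : (0 : ℝ) < A.toReal + c := by linarith
    have hle : B ≤ A + (c : EReal) := by
      rw [hAc]; exact hB.trans (by exact_mod_cast hpos.le)
    rw [max_eq_left hle, hAc, EReal.toReal_coe]

private lemma toReal_nonpos' {B : EReal} (hB : B ≤ 0) : B.toReal ≤ 0 := by
  by_cases hb : B = ⊥
  · simp [hb]
  · simpa using EReal.toReal_le_toReal hB hb (by simp)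

/-- Let `μ = ∨ᵢ αᵢ ⊙ δ_{xᵢ}` and `ν = ∨ⱼ βⱼ ⊙ δ_{yⱼ}` be
idempotent measures of finite support on an ultrametric space `X` with
`d̂(μ,ν) < r`.  Then for every `x ∈ X`,
`max {αᵢ ∣ d(xᵢ,x) < r} = max {βⱼ ∣ d(yⱼ,x) < r}`
(the maximum over the empty set being `-∞`). -/
theorem coefficients_over_balls_eq {X : Type*} [MetricSpace X] (hX : IsUltra X)
    {r : ℝ} (hr : 0 < r) {n m : ℕ}
    (x : Fin (n + 1) → X) (α : Fin (n + 1) → EReal)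
    (y : Fin (m + 1) → X) (β : Fin (m + 1) → EReal)
    (hα : ∀ i, α i ≤ 0) (hα0 : ∃ i, α i = 0)
    (hβ : ∀ j, β j ≤ 0) (hβ0 : ∃ j, β j = 0)
    (hd : dHatE (eD X) (idemOf x α) (idemOf y β) < ENNReal.ofReal r)
    (z : X) :
    (⨆ i, ⨆ (_ : dist (x i) z < r), α i) =
      ⨆ j, ⨆ (_ : dist (y j) z < r), β j := by
  classical
  obtain ⟨t, ⟨ht0, hteq⟩, htr⟩ := sInf_lt_iff.mp hd
  set A := (⨆ i, ⨆ (_ : dist (x i) z < r), α i) with hAdef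
  set A' := (⨆ j, ⨆ (_ : dist (y j) z < r), β j) with hA'def
  set c : ℝ := 1 + |A.toReal| + |A'.toReal| with hcdef
  set φ : X → ℝ := fun w => if dist w z < r then c else 0 with hφdef
  have hball : ∀ w w' : X, dist w w' < r → (dist w z < r ↔ dist w' z < r) := by
    intro w w' hww'
    constructor
    · intro h
      exact lt_of_le_of_lt (hX w' z w) (max_lt (by rwa [dist_comm]) h)
    · intro h
      exact lt_of_le_of_lt (hX w z w') (max_lt hww' h)
  have hφF : FrE (eD X) t φ := by
    intro w w' hww'
    have hdr : dist w w' < r := by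
      have h1 : ENNReal.ofReal (dist w w') < ENNReal.ofReal r := by
        have : edist w w' < ENNReal.ofReal r := lt_of_lt_of_le hww' htr.le
        rwa [edist_dist] at this
      exact (ENNReal.ofReal_lt_ofReal_iff hr).mp h1
    simp only [hφdef]
    exact if_congr (hball w w' hdr) rfl rfl
  have heq := hteq φ hφF
  simp only [idemOf, hφdef] at heq
  rw [supSplit α (fun i => dist (x i) z < r) c,
      supSplit β (fun j => dist (y j) z < r) c] at heq
  have hA0 : A ≤ 0 := iSup_le fun i => iSup_le fun _ => hα i
  have hA'0 : A' ≤ 0 := iSup_le fun j => iSup_le fun _ => hβ j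
  have hB0 : (⨆ i, ⨆ (_ : ¬ dist (x i) z < r), α i) ≤ 0 :=
    iSup_le fun i => iSup_le fun _ => hα i
  have hB'0 : (⨆ j, ⨆ (_ : ¬ dist (y j) z < r), β j) ≤ 0 :=
    iSup_le fun j => iSup_le fun _ => hβ j
  have hcA : -A.toReal + 1 ≤ c := by
    have := neg_le_abs A.toReal
    have := abs_nonneg A'.toReal
    rw [hcdef]; linarith
  have hcA' : -A'.toReal + 1 ≤ c := by
    have := neg_le_abs A'.toReal
    have := abs_nonneg A.toReal
    rw [hcdef]; linarith
  rw [resolveMax hA0 hB0 hcA, resolveMax hA'0 hB'0 hcA'] at heq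
  have hBr := toReal_nonpos' hB0
  have hB'r := toReal_nonpos' hB'0
  have hAr : A.toReal ≤ 0 := toReal_nonpos' hA0
  have hA'r : A'.toReal ≤ 0 := toReal_nonpos' hA'0
  have hArabs : -A.toReal ≤ |A.toReal| := neg_le_abs _
  have hA'rabs : -A'.toReal ≤ |A'.toReal| := neg_le_abs _
  split_ifs at heq with h1 h2 h2
  · rw [h1, h2]
  · exfalso
    have : (1:ℝ) ≤ A'.toReal + c := by rw [hcdef]; linarith
    linarith
  · exfalso
    have : (1:ℝ) ≤ A.toReal + c := by rw [hcdef]; linarith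
    linarith
  · have ht : A.toReal = A'.toReal := by linarith
    have hAt : A ≠ ⊤ := (hA0.trans_lt (by simp)).ne
    have hA't : A' ≠ ⊤ := (hA'0.trans_lt (by simp)).ne
    rw [← EReal.coe_toReal hAt h1, ← EReal.coe_toReal hA't h2, ht]


end
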